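/- The image of the derivation algebra of L₁ under the matrix exponential equals the automorphism group of L₁: for every automorphism σ of the ω-Lie algebra L₁ there exists a derivation d of L₁ with exp(d) = σ, and conversely exp(d) is an automorphism of L₁ for every derivation d of L₁. (Here derivations and automorphisms are identified with their 3×3 complex matrices relative to the basis x, y, z, and exp denotes the matrix exponential.) -/

import Mathlib

noncomputable section

/-- The underlying space ℂ³ of the ω-Lie algebra L₁. -/
abbrev V3 : Type := Fin 3 → ℂ

/-- The basis vector x = e₁. -/
def vx : V3 := ![1, 0, 0]

/-- The basis vector y = e₂. -/
def vy : V3 := ![0, 1, 0]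

/-- The basis vector z = e₃. -/
def vz : V3 := ![0, 0, 1]

/-- A 3×3 complex matrix is (identified with) a derivation of the bracket `b`. -/
def IsDerMat (b : V3 →ₗ[ℂ] V3 →ₗ[ℂ] V3) (A : Matrix (Fin 3) (Fin 3) ℂ) : Prop :=
  ∀ u v : V3,
    Matrix.toLin' A (b u v) = b (Matrix.toLin' A u) v + b u (Matrix.toLin' A v)

/-- A 3×3 complex matrix is (identified with) an automorphism of the bracket `b`. -/
def IsAutMat (b : V3 →ₗ[ℂ] V3 →ₗ[ℂ] V3) (A : Matrix (Fin 3) (Fin 3) ℂ) : Prop :=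
  Function.Bijective (Matrix.toLin' A) ∧
    ∀ u v : V3, Matrix.toLin' A (b u v) = b (Matrix.toLin' A u) (Matrix.toLin' A v)

set_option maxHeartbeats 1000000

lemma decompV3 (u : V3) : u = u 0 • vx + u 1 • vy + u 2 • vz := by
  funext i; fin_cases i <;> simp [vx, vy, vz]

lemma bform (b : V3 →ₗ[ℂ] V3 →ₗ[ℂ] V3)
    (hskew : ∀ u v : V3, b u v = - b v u)
    (hxy : b vx vy = vy) (hxz : b vx vz = 0) (hyz : b vy vz = vz) :
    ∀ u v : V3, b u v = ![0, u 0 * v 1 - u 1 * v 0, u 1 * v 2 - u 2 * v 1] := by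
  have sq : ∀ w : V3, b w w = 0 := by
    intro w
    have h := hskew w w
    funext i
    have h2 := congrFun h i
    simp only [Pi.neg_apply] at h2
    have h3 : (b w w) i = -((b w w) i) := h2
    have h4 : (2:ℂ) * (b w w) i = 0 := by linear_combination h3
    simpa using h4
  intro u v
  have hyx : b vy vx = -vy := by rw [hskew, hxy]
  have hzx : b vz vx = 0 := by rw [hskew, hxz, neg_zero]
  have hzy : b vz vy = -vz := by rw [hskew, hyz]
  conv_lhs => rw [decompV3 u, decompV3 v]
  simp only [map_add, map_smul, LinearMap.add_apply, LinearMap.smul_apply,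
    hxy, hxz, hyz, hyx, hzx, hzy, sq, smul_zero, smul_neg]
  funext i
  fin_cases i <;> simp [vx, vy, vz] <;> ring

def Amat (c u : ℂ) : Matrix (Fin 3) (Fin 3) ℂ := !![0,0,0; 0,0,0; c,-c,u]
def Emat (p t : ℂ) : Matrix (Fin 3) (Fin 3) ℂ := !![1,0,0; 0,1,0; p,-p,t]
def ff (u : ℂ) : ℂ := if u = 0 then 1 else (Complex.exp u - 1)/u

lemma Amat_sq (c u : ℂ) : Amat c u * Amat c u = u • Amat c u := by
  ext i j
  fin_cases i <;> fin_cases j <;>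
    simp [Amat, Matrix.mul_apply, Fin.sum_univ_three]

lemma exp_Amat (c u : ℂ) :
    NormedSpace.exp (Amat c u) = Emat (c * ff u) (Complex.exp u) := by
  by_cases hu : u = 0
  · subst hu
    have h2 : Amat c 0 * Amat c 0 = 0 := by rw [Amat_sq]; simp
    have hn : ∀ n : ℕ, 2 ≤ n → Amat c 0 ^ n = 0 := by
      intro n hn
      obtain ⟨k, rfl⟩ := Nat.exists_eq_add_of_le hn
      rw [pow_add, pow_two, h2, zero_mul]
    have he : NormedSpace.exp (Amat c 0)
        = ∑' n : ℕ, ((n.factorial : ℂ))⁻¹ • Amat c 0 ^ n := by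
      rw [NormedSpace.exp_eq_tsum ℂ]
    have hsum : (∑ n ∈ ({0, 1} : Finset ℕ), ((n.factorial : ℂ))⁻¹ • Amat c 0 ^ n)
        = 1 + Amat c 0 := by
      rw [Finset.sum_pair (by norm_num)]
      simp
    rw [he, tsum_eq_sum (s := {0, 1}) (by
      intro n hns
      have h2n : 2 ≤ n := by
        rcases n with _|_|n
        · simp at hns
        · simp at hns
        · omega
      rw [hn n h2n, smul_zero]), hsum]
    ext i j
    fin_cases i <;> fin_cases j <;>
      simp [Amat, Emat, ff, Matrix.one_apply, Complex.exp_zero, Matrix.vecHead, Matrix.vecTail, Function.comp]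
  · set S : Matrix (Fin 3) (Fin 3) ℂ := !![1,0,0; 0,1,0; -c/u, c/u, 1] with hS
    set T : Matrix (Fin 3) (Fin 3) ℂ := !![1,0,0; 0,1,0; c/u, -c/u, 1] with hT
    have hST : S * T = 1 := by
      ext i j
      fin_cases i <;> fin_cases j <;>
        simp [hS, hT, Matrix.mul_apply, Fin.sum_univ_three, Matrix.one_apply] <;> ring
    have hTS : T * S = 1 := by
      ext i j
      fin_cases i <;> fin_cases j <;>
        simp [hS, hT, Matrix.mul_apply, Fin.sum_univ_three, Matrix.one_apply] <;> ring
    have hSinv : S⁻¹ = T := Matrix.inv_eq_right_inv hST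
    have hSu : IsUnit S := ⟨⟨S, T, hST, hTS⟩, rfl⟩
    have hD : Matrix.diagonal ![0,0,u] = !![0,0,0; 0,0,0; 0,0,u] := by
      ext i j
      fin_cases i <;> fin_cases j <;> simp [Matrix.diagonal_apply, Matrix.vecHead, Matrix.vecTail, Function.comp]
    have hD' : Matrix.diagonal ![1,1,Complex.exp u] = !![1,0,0; 0,1,0; 0,0,Complex.exp u] := by
      ext i j
      fin_cases i <;> fin_cases j <;> simp [Matrix.diagonal_apply, Matrix.vecHead, Matrix.vecTail, Function.comp]
    have hdecomp : Amat c u = S * Matrix.diagonal ![0,0,u] * S⁻¹ := by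
      rw [hSinv, hD]
      ext i j
      fin_cases i <;> fin_cases j <;>
        simp [hS, hT, Amat, Matrix.mul_apply, Fin.sum_univ_three, Matrix.vecHead, Matrix.vecTail, Function.comp] <;>
        field_simp <;> ring
    rw [hdecomp, Matrix.exp_conj S _ hSu, Matrix.exp_diagonal, hSinv]
    have hev : (NormedSpace.exp ![(0:ℂ),0,u] : Fin 3 → ℂ) = ![1,1,Complex.exp u] := by
      funext i
      fin_cases i <;>
        simp [Pi.coe_exp, ← Complex.exp_eq_exp_ℂ, Complex.exp_zero]
    rw [hev, hD']
    ext i j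
    fin_cases i <;> fin_cases j <;>
      simp [hS, hT, Emat, ff, hu, Matrix.mul_apply, Fin.sum_univ_three, Matrix.vecHead, Matrix.vecTail, Function.comp] <;>
      field_simp <;> ring

lemma mulVec_eq (A : Matrix (Fin 3) (Fin 3) ℂ) (w : V3) :
    A.mulVec w = ![A 0 0 * w 0 + A 0 1 * w 1 + A 0 2 * w 2,
                   A 1 0 * w 0 + A 1 1 * w 1 + A 1 2 * w 2,
                   A 2 0 * w 0 + A 2 1 * w 1 + A 2 2 * w 2] := by
  funext i
  fin_cases i <;>
    simp [Matrix.mulVec, dotProduct, Fin.sum_univ_three] <;> ring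

/-- Every matrix of the form `Emat p t` with `t ≠ 0` is an automorphism. -/
lemma Emat_isAut (b : V3 →ₗ[ℂ] V3 →ₗ[ℂ] V3)
    (hb : ∀ u v : V3, b u v = ![0, u 0 * v 1 - u 1 * v 0, u 1 * v 2 - u 2 * v 1])
    (p t : ℂ) (ht : t ≠ 0) : IsAutMat b (Emat p t) := by
  constructor
  · set E' : Matrix (Fin 3) (Fin 3) ℂ := !![1,0,0; 0,1,0; -p/t, p/t, 1/t] with hE'
    have h1 : Emat p t * E' = 1 := by
      ext i j
      fin_cases i <;> fin_cases j <;>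
        simp [Emat, hE', Matrix.mul_apply, Fin.sum_univ_three, Matrix.one_apply] <;>
        field_simp <;> try ring
    have h2 : E' * Emat p t = 1 := by
      ext i j
      fin_cases i <;> fin_cases j <;>
        simp [Emat, hE', Matrix.mul_apply, Fin.sum_univ_three, Matrix.one_apply] <;>
        field_simp <;> try ring
    refine Function.bijective_iff_has_inverse.mpr ⟨Matrix.toLin' E', ?_, ?_⟩
    · intro w
      have h3 : Matrix.toLin' (E' * Emat p t) w = Matrix.toLin' (1 : Matrix (Fin 3) (Fin 3) ℂ) w := by
        rw [h2]
      simpa [Matrix.toLin'_mul] using h3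
    · intro w
      have h3 : Matrix.toLin' (Emat p t * E') w = Matrix.toLin' (1 : Matrix (Fin 3) (Fin 3) ℂ) w := by
        rw [h1]
      simpa [Matrix.toLin'_mul] using h3
  · intro u v
    simp only [Matrix.toLin'_apply, hb, mulVec_eq]
    funext i
    fin_cases i <;> simp [Emat] <;> ring

/-- `Amat c u` is a derivation. -/
lemma Amat_isDer (b : V3 →ₗ[ℂ] V3 →ₗ[ℂ] V3)
    (hb : ∀ u v : V3, b u v = ![0, u 0 * v 1 - u 1 * v 0, u 1 * v 2 - u 2 * v 1])
    (c u : ℂ) : IsDerMat b (Amat c u) := by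
  intro w w'
  simp only [Matrix.toLin'_apply, hb, mulVec_eq]
  funext i
  fin_cases i <;> simp [Amat] <;> ring

/-- Any derivation has the form `Amat c u`. -/
lemma der_shape (b : V3 →ₗ[ℂ] V3 →ₗ[ℂ] V3)
    (hb : ∀ u v : V3, b u v = ![0, u 0 * v 1 - u 1 * v 0, u 1 * v 2 - u 2 * v 1])
    (A : Matrix (Fin 3) (Fin 3) ℂ) (hA : IsDerMat b A) :
    A = Amat (A 2 0) (A 2 2) := by
  have e1 := hA vx vy
  have e2 := hA vx vz
  have e3 := hA vy vz
  simp [Matrix.toLin'_apply, hb, mulVec_eq, vx, vy, vz, Matrix.vecHead, Matrix.vecTail,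
    Function.comp, funext_iff, Fin.forall_fin_succ] at e1 e2 e3
  obtain ⟨h01, h00, h21⟩ := e1
  obtain ⟨h12, h10⟩ := e2
  obtain ⟨h02, -, h11⟩ := e3
  ext i j
  fin_cases i <;> fin_cases j <;>
    simp [Amat, h01, h00, h21, ← h12, ← h10, h02, h11]

/-- Any automorphism has the form `Emat p t` with `t ≠ 0`. -/
lemma aut_shape (b : V3 →ₗ[ℂ] V3 →ₗ[ℂ] V3)
    (hb : ∀ u v : V3, b u v = ![0, u 0 * v 1 - u 1 * v 0, u 1 * v 2 - u 2 * v 1])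
    (B : Matrix (Fin 3) (Fin 3) ℂ) (hB : IsAutMat b B) :
    B = Emat (B 2 0) (B 2 2) ∧ B 2 2 ≠ 0 := by
  obtain ⟨⟨hinj, -⟩, heq⟩ := hB
  have f1 := heq vx vy
  have f2 := heq vx vz
  have f3 := heq vy vz
  simp [Matrix.toLin'_apply, hb, mulVec_eq, vx, vy, vz, Matrix.vecHead, Matrix.vecTail,
    Function.comp, funext_iff, Fin.forall_fin_succ] at f1 f2 f3
  have hvz : B.mulVec vz ≠ 0 := by
    intro h0
    have h1 : Matrix.toLin' B vz = Matrix.toLin' B 0 := by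
      simp [Matrix.toLin'_apply, h0]
    have h2 := hinj h1
    have h3 := congrFun h2 2
    simp [vz] at h3
  have hq : ¬ (B 0 2 = 0 ∧ B 1 2 = 0 ∧ B 2 2 = 0) := by
    rintro ⟨h0, h1, h2⟩
    apply hvz
    funext i
    fin_cases i <;> simp [mulVec_eq, vz, h0, h1, h2]
  obtain ⟨h01, h11e, h21e⟩ := f1
  obtain ⟨g1, g2⟩ := f2
  obtain ⟨h02, h12e, h22e⟩ := f3
  have h12 : B 1 2 = 0 := by rw [h01, h02] at h12e; simpa using h12e
  have h22 : B 2 2 ≠ 0 := fun h => hq ⟨h02, h12, h⟩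
  have h11 : B 1 1 = 1 := by
    have h' : (B 1 1 - 1) * B 2 2 = 0 := by linear_combination (B 2 1) * h12 - h22e
    have h'' := (mul_eq_zero.mp h').resolve_right h22
    linear_combination h''
  have h00 : B 0 0 = 1 := by
    rw [h01, h11] at h11e
    linear_combination - h11e
  have h10 : B 1 0 = 0 := by
    rw [h12] at g2
    simp at g2
    rcases g2 with g2 | g2
    · exact g2
    · exact absurd g2 h22
  have h21 : B 2 1 = - B 2 0 := by
    rw [h10, h11] at h21e
    linear_combination h21e
  refine ⟨?_, h22⟩
  ext i j
  fin_cases i <;> fin_cases j <;>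
    simp [Emat, h00, h01, h02, h10, h11, h12, h21]


/-- The image of the derivation algebra of the ω-Lie algebra L₁ (with
`[x,y] = y`, `[x,z] = 0`, `[y,z] = z`) under the matrix exponential is exactly the
automorphism group of L₁: the exponential of every derivation is an automorphism, and
every automorphism is the exponential of some derivation. -/
theorem exp_derivations_eq_automorphisms_L1
    (b : V3 →ₗ[ℂ] V3 →ₗ[ℂ] V3)
    (hskew : ∀ u v : V3, b u v = - b v u)
    (hxy : b vx vy = vy) (hxz : b vx vz = 0) (hyz : b vy vz = vz) :
    (∀ A : Matrix (Fin 3) (Fin 3) ℂ, IsDerMat b A → IsAutMat b (NormedSpace.exp A)) ∧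
    (∀ B : Matrix (Fin 3) (Fin 3) ℂ, IsAutMat b B →
      ∃ A : Matrix (Fin 3) (Fin 3) ℂ, IsDerMat b A ∧ NormedSpace.exp A = B) := by
  have hb := bform b hskew hxy hxz hyz
  constructor
  · intro A hA
    rw [der_shape b hb A hA, exp_Amat]
    exact Emat_isAut b hb _ _ (Complex.exp_ne_zero _)
  · intro B hB
    obtain ⟨hBe, ht⟩ := aut_shape b hb B hB
    set p := B 2 0 with hp
    set t := B 2 2 with htt
    set u := Complex.log t with hu
    have hexp : Complex.exp u = t := Complex.exp_log ht
    have hf : ff u ≠ 0 := by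
      unfold ff
      split_ifs with h
      · exact one_ne_zero
      · intro h0
        rcases div_eq_zero_iff.mp h0 with h1 | h1
        · have ht1 : t = 1 := by rw [← hexp]; linear_combination h1
          rw [hu, ht1, Complex.log_one] at h
          exact h rfl
        · exact h h1
    refine ⟨Amat (p / ff u) u, Amat_isDer b hb _ _, ?_⟩
    rw [exp_Amat, hexp, div_mul_cancel₀ _ hf, ← hBe]
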